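/- arXiv:1407.4235 — 2 statements merged into one kernel-verified Lean document; each statement's English description precedes it below -/
import Mathlib

section
/- Let H be a connected finite simple graph with two vertices s and t at distance d ≥ 2 such that every vertex of H lies in some layer L_0, L_1, …, L_d, and let (G, L) be the constructed list-coloring instance. Then for every proper L-coloring f of G, the sequence s, f(u_1), f(u_2), …, f(u_{d−1}), t is an S-path in H, i.e., a shortest path from s to t. -/
/-- The layer `L_i`: vertices at distance `i` from `s` and `d - i` from `t`. -/
def layerSet {V : Type*} (H : SimpleGraph V) (s t : V) (d i : ℕ) : Set V :=
  {v | H.dist s v = i ∧ H.dist t v = d - i}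

/-- The vertices of the constructed graph `G`: a layer vertex `u_i` for each
`1 ≤ i ≤ d - 1`, and a forbidden vertex `w_{a,b}` for each `1 ≤ i ≤ d - 2` and each pair
`a ∈ L_i`, `b ∈ L_{i+1}` with `ab ∉ E(H)`. -/
abbrev CVert {V : Type*} (H : SimpleGraph V) (s t : V) (d : ℕ) :=
  {i : ℕ // 1 ≤ i ∧ i ≤ d - 1} ⊕
    {x : ℕ × V × V // 1 ≤ x.1 ∧ x.1 ≤ d - 2 ∧
      x.2.1 ∈ layerSet H s t d x.1 ∧ x.2.2 ∈ layerSet H s t d (x.1 + 1) ∧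
      ¬ H.Adj x.2.1 x.2.2}

/-- Adjacency of the constructed graph: the forbidden vertex `w_{a,b}` for layers
`i, i+1` is joined exactly to the layer vertices `u_i` and `u_{i+1}`. -/
def CAdj {V : Type*} (H : SimpleGraph V) (s t : V) (d : ℕ) :
    CVert H s t d → CVert H s t d → Prop
  | Sum.inl u, Sum.inr w => u.1 = w.1.1 ∨ u.1 = w.1.1 + 1
  | Sum.inr w, Sum.inl u => u.1 = w.1.1 ∨ u.1 = w.1.1 + 1
  | _, _ => False

/-- The constructed graph `G`. -/
def CGraph {V : Type*} (H : SimpleGraph V) (s t : V) (d : ℕ) :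
    SimpleGraph (CVert H s t d) where
  Adj := CAdj H s t d
  symm := ⟨by rintro (u | w) (u' | w') h <;> simp [CAdj] at h ⊢ <;> exact h⟩
  loopless := ⟨by rintro (u | w) h <;> simp [CAdj] at h⟩

/-- The list assignment of the constructed instance: the layer vertex `u_i` has list
`L_i`, and the forbidden vertex `w_{a,b}` has list `{a, b}` (colors are vertices of
`H`). -/
def CList {V : Type*} (H : SimpleGraph V) (s t : V) (d : ℕ) :
    CVert H s t d → Set V
  | Sum.inl u => layerSet H s t d u.1
  | Sum.inr w => {w.1.2.1, w.1.2.2}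

/-- A proper `L`-coloring of `G`: each vertex gets a color from its list, and adjacent
vertices get different colors. -/
def IsProperListColoring {W β : Type*} (G : SimpleGraph W) (L : W → Set β)
    (f : W → β) : Prop :=
  (∀ v, f v ∈ L v) ∧ ∀ ⦃u w⦄, G.Adj u w → f u ≠ f w


private lemma walk_of_chain {V : Type*} (H : SimpleGraph V) :
    ∀ (n : ℕ) (g : ℕ → V), (∀ i < n, H.Adj (g i) (g (i + 1))) →
      ∃ p : H.Walk (g 0) (g n), p.length = n ∧ ∀ i ≤ n, p.getVert i = g i := by
  intro n
  induction n with
  | zero => exact fun g _ => ⟨SimpleGraph.Walk.nil, rfl, by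
      intro i hi; interval_cases i; simp⟩
  | succ m ih =>
    intro g hg
    obtain ⟨q, hql, hqv⟩ := ih (fun i => g (i + 1)) (fun i hi => hg (i + 1) (by omega))
    refine ⟨SimpleGraph.Walk.cons (hg 0 (by omega)) q, by simp [hql], ?_⟩
    intro i hi
    cases i with
    | zero => simp
    | succ j => rw [SimpleGraph.Walk.getVert_cons_succ]; exact hqv j (by omega)

/-- Every proper list coloring `f` of the constructed instance `(G, L)` yields an S-path
in `H`: the sequence `s, f(u_1), …, f(u_{d-1}), t` is a shortest path from `s` to `t`. -/
theorem coloring_yields_sPath {V : Type*} [Fintype V] [DecidableEq V]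
    (H : SimpleGraph V) (hconn : H.Connected) (s t : V) (d : ℕ)
    (hd : H.dist s t = d) (hd2 : 2 ≤ d)
    (hlayers : ∀ v : V, ∃ i ≤ d, v ∈ layerSet H s t d i)
    (f : CVert H s t d → V)
    (hf : IsProperListColoring (CGraph H s t d) (CList H s t d) f) :
    ∃ p : H.Walk s t, p.IsPath ∧ p.length = d ∧
      ∀ u : {i : ℕ // 1 ≤ i ∧ i ≤ d - 1}, p.getVert u.1 = f (Sum.inl u) := by
  classical
  set g : ℕ → V := fun i =>
    if h : 1 ≤ i ∧ i ≤ d - 1 then f (Sum.inl ⟨i, h⟩) else if i = 0 then s else t with hgdef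
  have hg0 : g 0 = s := by
    simp only [hgdef]; rw [dif_neg (by omega)]; simp
  have hgd : g d = t := by
    simp only [hgdef]; rw [dif_neg (by omega), if_neg (by omega)]
  have hgu : ∀ (i : ℕ) (hi : 1 ≤ i ∧ i ≤ d - 1), g i = f (Sum.inl ⟨i, hi⟩) := by
    intro i hi; simp only [hgdef]; rw [dif_pos hi]
  have hgmem : ∀ i ≤ d, g i ∈ layerSet H s t d i := by
    intro i hid
    by_cases hi : 1 ≤ i ∧ i ≤ d - 1
    · rw [hgu i hi]
      exact hf.1 (Sum.inl ⟨i, hi⟩)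
    · rcases Nat.eq_zero_or_pos i with h0 | h1
      · subst h0
        rw [hg0]
        exact ⟨by simp, by rw [H.dist_comm]; simpa using hd⟩
      · have : i = d := by omega
        subst this
        rw [hgd]
        exact ⟨hd, by simp⟩
  have hadj : ∀ i < d, H.Adj (g i) (g (i + 1)) := by
    intro i hid
    rcases Nat.eq_zero_or_pos i with h0 | h1
    · subst h0
      have h1m := hgmem 1 (by omega)
      rw [hg0]
      exact SimpleGraph.dist_eq_one_iff_adj.mp h1m.1
    · by_cases hlast : i = d - 1
      · subst hlast
        have hm := hgmem (d - 1) (by omega)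
        have ht1 : H.dist t (g (d - 1)) = 1 := by rw [hm.2]; omega
        have hstep : (d - 1) + 1 = d := by omega
        rw [hstep, hgd]
        exact (SimpleGraph.dist_eq_one_iff_adj.mp ht1).symm
      · have hi2 : 1 ≤ i ∧ i ≤ d - 2 := ⟨h1, by omega⟩
        have hmi := hgmem i (by omega)
        have hmi1 := hgmem (i + 1) (by omega)
        by_contra hna
        set w : CVert H s t d :=
          Sum.inr ⟨(i, g i, g (i + 1)), hi2.1, hi2.2, hmi, hmi1, hna⟩ with hw
        have hadj1 : (CGraph H s t d).Adj (Sum.inl ⟨i, by omega⟩) w := Or.inl rfl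
        have hadj2 : (CGraph H s t d).Adj (Sum.inl ⟨i + 1, by omega⟩) w := Or.inr rfl
        have hmem := hf.1 w
        have e1 : f (Sum.inl ⟨i, by omega⟩) = g i := (hgu i ⟨by omega, by omega⟩).symm
        have e2 : f (Sum.inl ⟨i + 1, by omega⟩) = g (i + 1) :=
          (hgu (i + 1) ⟨by omega, by omega⟩).symm
        rcases hmem with h | h
        · exact hf.2 hadj1 (by rw [e1, h])
        · exact hf.2 hadj2 (by rw [e2, h])
  obtain ⟨p, hpl, hpv⟩ := walk_of_chain H d g hadj
  refine ⟨p.copy hg0 hgd, ?_, by simpa using hpl, ?_⟩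
  · apply SimpleGraph.Walk.isPath_of_length_eq_dist
    simp [hpl, hd]
  · intro u
    rw [SimpleGraph.Walk.getVert_copy, hpv u.1 (by omega), hgu u.1 u.2]
end

section
/- Let H be a connected finite simple graph with two vertices s and t at distance d ≥ 2 such that every vertex of H lies in some layer L_0, L_1, …, L_d, and let (G, L) be the constructed list-coloring instance. Then for every S-path P in H there exists a proper L-coloring f of G such that, for each 1 ≤ i ≤ d−1, f(u_i) equals the unique vertex of P in layer L_i. -/
/-- An S-path: a shortest path between `s` and `t`, i.e. a path with exactly
`dist s t` edges. -/
def IsSPath {V : Type*} (H : SimpleGraph V) {s t : V} (p : H.Walk s t) : Prop :=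
  p.IsPath ∧ p.length = H.dist s t

private lemma walk_length_drop {V : Type*} {H : SimpleGraph V} {u v : V}
    (p : H.Walk u v) (n : ℕ) : (p.drop n).length = p.length - n := by
  induction p generalizing n with
  | nil => cases n <;> simp [SimpleGraph.Walk.drop]
  | cons h q ih =>
    match n with
    | 0 => simp [SimpleGraph.Walk.drop]
    | n + 1 => simp [SimpleGraph.Walk.drop, ih]

private lemma dist_getVert_le {V : Type*} {H : SimpleGraph V} (hconn : H.Connected)
    {u v : V} (p : H.Walk u v) (n : ℕ) : H.dist u (p.getVert n) ≤ n := by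
  induction p generalizing n with
  | nil => simp [SimpleGraph.Walk.getVert, SimpleGraph.dist_self]
  | cons h q ih =>
    match n with
    | 0 => simp
    | n + 1 =>
      calc H.dist _ _ ≤ H.dist _ _ + H.dist _ (q.getVert n) := hconn.dist_triangle
        _ ≤ 1 + n := by
            gcongr
            · exact SimpleGraph.dist_le (SimpleGraph.Walk.cons h .nil)
            · exact ih n
        _ = n + 1 := by omega

private lemma getVert_layer {V : Type*} {H : SimpleGraph V} (hconn : H.Connected)
    {s t : V} {d : ℕ} (hd : H.dist s t = d) (P : H.Walk s t) (hP : IsSPath H P)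
    {n : ℕ} (hn : n ≤ d) : P.getVert n ∈ layerSet H s t d n := by
  have h1 : H.dist s (P.getVert n) ≤ n := dist_getVert_le hconn P n
  have h2 : H.dist (P.getVert n) t ≤ d - n := by
    have := SimpleGraph.dist_le (P.drop n)
    rwa [walk_length_drop, hP.2, hd] at this
  have h3 : d ≤ H.dist s (P.getVert n) + H.dist (P.getVert n) t := by
    rw [← hd]; exact hconn.dist_triangle
  constructor
  · omega
  · rw [SimpleGraph.dist_comm]; omega

/-- Every S-path `P` in `H` yields a proper list coloring `f` of the constructed
instance `(G, L)` in which each layer vertex `u_i` is colored by the unique vertex of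
`P` lying in layer `L_i`. -/
theorem sPath_yields_coloring {V : Type*} [Fintype V] [DecidableEq V]
    (H : SimpleGraph V) (hconn : H.Connected) (s t : V) (d : ℕ)
    (hd : H.dist s t = d) (hd2 : 2 ≤ d)
    (hlayers : ∀ v : V, ∃ i ≤ d, v ∈ layerSet H s t d i)
    (P : H.Walk s t) (hP : IsSPath H P) :
    ∃ f : CVert H s t d → V,
      IsProperListColoring (CGraph H s t d) (CList H s t d) f ∧
      ∀ u : {i : ℕ // 1 ≤ i ∧ i ≤ d - 1},
        f (Sum.inl u) ∈ P.support ∧ f (Sum.inl u) ∈ layerSet H s t d u.1 := by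
  obtain ⟨hpath, hlen⟩ := hP
  have hlenP : P.length = d := hlen.trans hd
  have hgv : ∀ n ≤ d, P.getVert n ∈ layerSet H s t d n :=
    fun n hn => getVert_layer hconn hd P ⟨hpath, hlen⟩ hn
  have hne : ∀ {i j : ℕ} {x y : V}, x ∈ layerSet H s t d i → y ∈ layerSet H s t d j →
      i ≠ j → x ≠ y := by
    rintro i j x y hx hy hij rfl
    exact hij (hx.1.symm.trans hy.1)
  refine ⟨fun z => match z with
    | Sum.inl u => P.getVert u.1
    | Sum.inr w => if w.1.2.1 = P.getVert w.1.1 then w.1.2.2 else w.1.2.1, ⟨?_, ?_⟩, ?_⟩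
  · rintro (u | w)
    · exact hgv u.1 (by omega)
    · dsimp [CList]
      split <;> simp
  · rintro (u | w) (u' | w') hadj <;> dsimp [CGraph, CAdj] at hadj ⊢
    · -- u layer vertex, w' forbidden
      obtain ⟨hi1, hi2, ha, hb, hnadj⟩ := w'.2
      have hiu := u.2
      rcases hadj with h | h <;> rw [h] <;> split
      · next heq =>
          exact hne (hgv w'.1.1 (by omega)) hb (by omega)
      · next hne' => exact fun hc => hne' hc.symm
      · next heq =>
          intro hc
          apply hnadj
          rw [heq, ← hc]
          exact P.adj_getVert_succ (by omega)
      · next hne' =>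
          exact hne (hgv (w'.1.1 + 1) (by omega)) ha (by omega)
    · obtain ⟨hi1, hi2, ha, hb, hnadj⟩ := w.2
      rcases hadj with h | h <;> rw [h] <;> split
      · next heq =>
          exact (hne hb (hgv w.1.1 (by omega)) (by omega))
      · next hne' => exact hne'
      · next heq =>
          intro hc
          apply hnadj
          rw [heq, hc]
          exact P.adj_getVert_succ (by omega)
      · next hne' =>
          exact hne ha (hgv (w.1.1 + 1) (by omega)) (by omega)
  · intro u
    refine ⟨?_, hgv u.1 (by omega)⟩
    rw [SimpleGraph.Walk.mem_support_iff_exists_getVert]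
    exact ⟨u.1, rfl, by omega⟩
end
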